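/- Suppose JA and JB are affine maps. Then for all γ ∈ (0,1) and λ ∈ (0,1], the two Aragón Artacho–Campoy operators commute, T(Aγ,Bγ)∘T(Bγ,Aγ) = T(Bγ,Aγ)∘T(Aγ,Bγ), if and only if RBγ∘RAγ∘RAγ∘RBγ = RAγ∘RBγ∘RBγ∘RAγ. -/
import Mathlib


theorem aacaStmt13 {X : Type*} [NormedAddCommGroup X] [InnerProductSpace ℝ X] [CompleteSpace X]
    (JA JB : X → X)
    (hJA : ∀ (x y : X) (t : ℝ), JA (t • x + (1 - t) • y) = t • JA x + (1 - t) • JA y)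
    (hJB : ∀ (x y : X) (t : ℝ), JB (t • x + (1 - t) • y) = t • JB x + (1 - t) • JB y)
    (w : X) (γ lam : ℝ)
    (hγ : γ ∈ Set.Ioo (0 : ℝ) 1) (hlam : lam ∈ Set.Ioc (0 : ℝ) 1)
    (RAγ RBγ TAγBγ TBγAγ : X → X)
    (hRAγ : ∀ x, RAγ x = (2 * γ) • JA x + (2 * (1 - γ)) • w - x)
    (hRBγ : ∀ x, RBγ x = (2 * γ) • JB x + (2 * (1 - γ)) • w - x)
    (hTAB : ∀ x, TAγBγ x = (1 - lam) • x + lam • RBγ (RAγ x))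
    (hTBA : ∀ x, TBγAγ x = (1 - lam) • x + lam • RAγ (RBγ x)) :
    (∀ x : X, TAγBγ (TBγAγ x) = TBγAγ (TAγBγ x)) ↔
      (∀ x : X, RBγ (RAγ (RAγ (RBγ x))) = RAγ (RBγ (RBγ (RAγ x)))) := by
  have hA : ∀ (x y : X) (t : ℝ), RAγ (t • x + (1 - t) • y) = t • RAγ x + (1 - t) • RAγ y := by
    intro x y t
    rw [hRAγ, hRAγ, hRAγ, hJA]
    module
  have hB : ∀ (x y : X) (t : ℝ), RBγ (t • x + (1 - t) • y) = t • RBγ x + (1 - t) • RBγ y := by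
    intro x y t
    rw [hRBγ, hRBγ, hRBγ, hJB]
    module
  have hS : ∀ (x y : X) (t : ℝ),
      RBγ (RAγ (t • x + (1 - t) • y)) = t • RBγ (RAγ x) + (1 - t) • RBγ (RAγ y) := by
    intro x y t; rw [hA, hB]
  have hS' : ∀ (x y : X) (t : ℝ),
      RAγ (RBγ (t • x + (1 - t) • y)) = t • RAγ (RBγ x) + (1 - t) • RAγ (RBγ y) := by
    intro x y t; rw [hB, hA]
  have key1 : ∀ x : X, RBγ (RAγ ((1 - lam) • x + lam • RAγ (RBγ x)))
      = (1 - lam) • RBγ (RAγ x) + lam • RBγ (RAγ (RAγ (RBγ x))) := by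
    intro x
    have h := hS x (RAγ (RBγ x)) (1 - lam)
    rw [show (1 : ℝ) - (1 - lam) = lam from by ring] at h
    exact h
  have key2 : ∀ x : X, RAγ (RBγ ((1 - lam) • x + lam • RBγ (RAγ x)))
      = (1 - lam) • RAγ (RBγ x) + lam • RAγ (RBγ (RBγ (RAγ x)))  := by
    intro x
    have h := hS' x (RBγ (RAγ x)) (1 - lam)
    rw [show (1 : ℝ) - (1 - lam) = lam from by ring] at h
    exact h
  have hl : lam ≠ 0 := ne_of_gt hlam.1
  constructor
  · intro h x
    have hx := h x
    rw [hTAB, hTBA, hTBA, hTAB, key1, key2] at hx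
    have e : (lam * lam) • RBγ (RAγ (RAγ (RBγ x))) - (lam * lam) • RAγ (RBγ (RBγ (RAγ x)))
        = ((1 - lam) • ((1 - lam) • x + lam • RAγ (RBγ x))
            + lam • ((1 - lam) • RBγ (RAγ x) + lam • RBγ (RAγ (RAγ (RBγ x)))))
          - ((1 - lam) • ((1 - lam) • x + lam • RBγ (RAγ x))
            + lam • ((1 - lam) • RAγ (RBγ x) + lam • RAγ (RBγ (RBγ (RAγ x))))) := by
      module
    rw [hx, sub_self] at e
    exact smul_right_injective X (mul_ne_zero hl hl) (eq_of_sub_eq_zero e)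
  · intro h x
    rw [hTAB, hTBA, hTBA, hTAB, key1, key2, h x]
    module
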